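/- For every k ≥ 1, the symmetric subshift Σ_a with parameter a = ω_{a*,k}''' satisfies lim_{n→∞} (1/n) log₂ |B_n(Σ_a)| = 2^{-k}; that is, its topological entropy equals 1/2^k. -/

import Mathlib

open Filter Topology

namespace Paper

/-- One-sided infinite binary sequences (indexed from 0): the space Σ₂. -/
abbrev Seq := ℕ → Bool

/-- The one-sided shift map σ. -/
def shift (x : Seq) : Seq := fun i => x (i + 1)

/-- The mirror image x̄ of a sequence. -/
def mirror (x : Seq) : Seq := fun i => !x i

/-- Strict lexicographic order: x ≺ y iff x k < y k at the first index k where they differ. -/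
def lexLt (x y : Seq) : Prop := ∃ k, (∀ i < k, x i = y i) ∧ x k < y k

/-- Non-strict lexicographic order. -/
def lexLe (x y : Seq) : Prop := lexLt x y ∨ x = y

/-- The symmetric subshift Σ_a = {x : ā ≺ σⁿ x ≺ a for all n ≥ 0}. -/
def SigmaA (a : Seq) : Set Seq :=
  {x | ∀ n : ℕ, lexLt (mirror a) (shift^[n] x) ∧ lexLt (shift^[n] x) a}

/-- A finite word identified with the sequence ω0^∞. -/
def wordSeq (w : List Bool) : Seq := fun i => w.getD i false

/-- The word w occurs in the sequence x. -/
def occursIn (w : List Bool) (x : Seq) : Prop :=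
  ∃ i, ∀ j < w.length, x (i + j) = w.getD j false

/-- B_n(Σ): admissible words of length n. -/
def Bword (S : Set Seq) (n : ℕ) : Set (List Bool) :=
  {w | w.length = n ∧ ∃ x ∈ S, occursIn w x}

/-- The language L(Σ) = ⋃_{n ≥ 1} B_n(Σ). -/
def lang (S : Set Seq) : Set (List Bool) :=
  {w | 1 ≤ w.length ∧ ∃ x ∈ S, occursIn w x}

/-- Transitivity: every ordered pair of admissible words can be bridged. -/
def IsTransitiveShift (S : Set Seq) : Prop :=
  ∀ u ∈ lang S, ∀ v ∈ lang S, ∃ w : List Bool, (u ++ w ++ v) ∈ lang S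

/-- Specification: bridges can be chosen of a fixed length m. -/
def HasSpecification (S : Set Seq) : Prop :=
  ∃ m : ℕ, ∀ u ∈ lang S, ∀ v ∈ lang S,
    ∃ w : List Bool, w.length = m ∧ (u ++ w ++ v) ∈ lang S

/-- Subshift of finite type: defined by a finite set of forbidden words of equal length. -/
def IsSFT (S : Set Seq) : Prop :=
  ∃ (F : Finset (List Bool)) (n : ℕ), (∀ w ∈ F, w.length = n) ∧
    S = {x : Seq | ∀ w ∈ F, ¬ occursIn w x}

/-- ω''' = w₁…w_m (w̄₁…w̄_{m-1}1)^∞, with the convention 1''' = 1(01)^∞. -/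
def triple (w : List Bool) : Seq :=
  if w.length ≤ 1 then fun i => decide (i % 2 = 0)
  else fun i =>
    if i < w.length then w.getD i false
    else if (i - w.length) % w.length = w.length - 1 then true
    else !(w.getD ((i - w.length) % w.length) false)

/-- The Thue–Morse sequence t (t 0 = 0, 0-indexed). -/
def thueMorse (n : ℕ) : Bool := decide (((Nat.digits 2 n).count 1) % 2 = 1)

/-- a* = σ(Thue–Morse sequence) = 1101001100101101… . -/
def astar : Seq := fun i => thueMorse (i + 1)

/-- ω_{a*,k}: the word formed by the first 2^k digits of a*. -/
def astarWord (k : ℕ) : List Bool := List.ofFn fun j : Fin (2 ^ k) => astar j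

/-- a is an i-sequence. -/
def IsISequence (i : ℕ) (a : Seq) : Prop :=
  if i = 0 then lexLt (triple (astarWord 1)) a ∧ lexLt a (fun _ => true)
  else lexLt (triple (astarWord (i + 1))) a ∧ lexLe a (triple (astarWord i))

/-- i-irreducible word (indices of letters are 1-based, as in the paper). -/
def IIrreducible (i : ℕ) (w : List Bool) : Prop :=
  w ≠ [] ∧ w.getLast? = some true ∧ IsISequence i (wordSeq w) ∧
    ∀ j, 2 ^ i < j → j < w.length → w.getD (j - 1) false = true →
      lexLt (triple (w.take j)) (wordSeq w)

/-- Irreducible word. -/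
def IrredWord (w : List Bool) : Prop :=
  w ≠ [] ∧ w.getD 0 false = true ∧ w.getLast? = some true ∧
    ∀ k, 1 ≤ k → k < w.length → w.getD (k - 1) false = true →
      lexLt (triple (w.take k)) (wordSeq w)

/-- Topological entropy h_top(Σ) = lim (1/n) log₂ |B_n(Σ)| (stated via limsup;
the limit exists by subadditivity, so this agrees with the limit). -/
noncomputable def htop (S : Set Seq) : ℝ :=
  Filter.limsup (fun n : ℕ => Real.logb 2 ((Bword S n).ncard) / (n : ℝ)) Filter.atTop

/-- The sequence (10)^∞. -/
def tenSeq : Seq := fun i => decide (i % 2 = 0)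

/-- The sequence 11(01)^∞. -/
def oneoneSeq : Seq := fun i => decide (i = 0 ∨ i % 2 = 1)

/-- Complete invariance of A inside S: σ(A) = A = σ⁻¹(A) ∩ S. -/
def CompletelyInvariant (S A : Set Seq) : Prop :=
  shift '' A = A ∧ shift ⁻¹' A ∩ S = A

/-- Transitive component of a subshift S. -/
def IsTransitiveComponent (S A : Set Seq) : Prop :=
  A ⊆ S ∧ IsClosed A ∧ CompletelyInvariant S A ∧ IsTransitiveShift A ∧
    ∀ A' : Set Seq, A' ⊆ S → IsClosed A' → CompletelyInvariant S A' →
      (∃ x ∈ A', A' ⊆ closure (Set.range fun n => shift^[n] x)) → ¬A ⊂ A'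

/-- The exceptional set 𝓔: parameters a ≻ a* lying in no interval (ω0^∞, ω''')
for any i-irreducible word ω. -/
def exceptionalSet : Set Seq :=
  {a | lexLt astar a ∧ ∀ (i : ℕ) (ω : List Bool), IIrreducible i ω →
    ¬(lexLt (wordSeq ω) a ∧ lexLt a (triple ω))}

-- basic lemmas
lemma bool_lt {a b : Bool} : a < b ↔ a = false ∧ b = true := Bool.lt_iff

lemma lexLt_of_agree_lt {x y : Seq} (k : ℕ) (h : ∀ i < k, x i = y i)
    (h1 : x k = false) (h2 : y k = true) : lexLt x y :=
  ⟨k, h, bool_lt.mpr ⟨h1, h2⟩⟩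

lemma lexLt_irrefl (x : Seq) : ¬ lexLt x x := by
  rintro ⟨k, _, hk⟩
  exact absurd hk (lt_irrefl _)

lemma lexLt_asymm {x y : Seq} (h : lexLt x y) (h' : lexLt y x) : False := by
  obtain ⟨k, hk, hklt⟩ := h
  obtain ⟨j, hj, hjlt⟩ := h'
  rcases lt_trichotomy k j with hlt | rfl | hlt
  · rw [hj k hlt] at hklt; exact absurd hklt (lt_irrefl _)
  · exact absurd (hklt.trans hjlt) (lt_irrefl _)
  · rw [hk j hlt] at hjlt; exact absurd hjlt (lt_irrefl _)

lemma lexLt_total {x y : Seq} (h : x ≠ y) : lexLt x y ∨ lexLt y x := by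
  have hex : ∃ k, x k ≠ y k := by
    by_contra hc
    push_neg at hc
    exact h (funext hc)
  classical
  set k := Nat.find hex with hkdef
  have hk : x k ≠ y k := Nat.find_spec hex
  have hlt : ∀ i < k, x i = y i := fun i hi => by
    by_contra hne
    have hle : k ≤ i := Nat.find_le hne
    omega
  cases hx : x k <;> cases hy : y k
  · rw [hx, hy] at hk; simp at hk
  · exact Or.inl ⟨k, hlt, bool_lt.mpr ⟨hx, hy⟩⟩
  · exact Or.inr ⟨k, fun i hi => (hlt i hi).symm, bool_lt.mpr ⟨hy, hx⟩⟩
  · rw [hx, hy] at hk; simp at hk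

lemma lexLe_iff_not_lt {x y : Seq} : lexLe x y ↔ ¬ lexLt y x := by
  constructor
  · rintro (h | rfl)
    · exact fun h' => lexLt_asymm h h'
    · exact lexLt_irrefl x
  · intro h
    by_cases hxy : x = y
    · exact Or.inr hxy
    · rcases lexLt_total hxy with h' | h'
      · exact Or.inl h'
      · exact absurd h' h

lemma mirror_mirror (x : Seq) : mirror (mirror x) = x := by
  funext i; simp [mirror]

lemma lexLt_mirror_iff {x y : Seq} : lexLt (mirror x) (mirror y) ↔ lexLt y x := by
  constructor
  · rintro ⟨k, hk, hklt⟩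
    refine ⟨k, fun i hi => ?_, ?_⟩
    · have h2 := hk i hi
      have h3 := congrArg (fun b => !b) h2
      simpa [mirror] using h3.symm
    · rw [bool_lt] at hklt ⊢
      simp [mirror] at hklt
      exact ⟨hklt.2, hklt.1⟩
  · rintro ⟨k, hk, hklt⟩
    refine ⟨k, fun i hi => by simp [mirror, hk i hi], ?_⟩
    rw [bool_lt] at hklt ⊢
    simp [mirror, hklt.1, hklt.2]

-- shift iterate
lemma shift_iter (n : ℕ) (x : Seq) (i : ℕ) : (shift^[n] x) i = x (n + i) := by
  induction n generalizing x i with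
  | zero => simp
  | succ n ih =>
    rw [Function.iterate_succ_apply]
    rw [ih]
    simp [shift]
    congr 1
    omega

-- cons and T
def cons (b : Bool) (x : Seq) : Seq := fun i => match i with
  | 0 => b
  | i + 1 => x i

@[simp] lemma cons_zero (b : Bool) (x : Seq) : cons b x 0 = b := rfl
@[simp] lemma cons_succ (b : Bool) (x : Seq) (i : ℕ) : cons b x (i + 1) = x i := rfl

def T (x : Seq) : Seq := fun i => if i % 2 = 0 then x (i / 2) else !(x (i / 2))

lemma T_even (x : Seq) (j : ℕ) : T x (2 * j) = x j := by
  simp [T, Nat.mul_mod_right, Nat.mul_div_cancel_left _ (by norm_num : 0 < 2)]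

lemma T_odd (x : Seq) (j : ℕ) : T x (2 * j + 1) = !(x j) := by
  have h1 : (2 * j + 1) % 2 = 1 := by omega
  have h2 : (2 * j + 1) / 2 = j := by omega
  simp [T, h1, h2]

lemma mirror_cons (b : Bool) (x : Seq) : mirror (cons b x) = cons (!b) (mirror x) := by
  funext i; cases i <;> rfl

lemma mirror_T (x : Seq) : mirror (T x) = T (mirror x) := by
  funext i
  rcases Nat.even_or_odd i with ⟨j, hj⟩ | ⟨j, hj⟩
  · subst hj
    rw [show j + j = 2 * j by ring]
    simp [mirror, T_even]
  · subst hj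
    simp [mirror, T_odd]

lemma cons_lexLt_cons_iff {b : Bool} {x y : Seq} :
    lexLt (cons b x) (cons b y) ↔ lexLt x y := by
  constructor
  · rintro ⟨k, hk, hklt⟩
    match k with
    | 0 => simp at hklt
    | k + 1 =>
      exact ⟨k, fun i hi => by have := hk (i+1) (by omega); simpa using this, by simpa using hklt⟩
  · rintro ⟨k, hk, hklt⟩
    exact ⟨k + 1, fun i hi => by
      match i with
      | 0 => rfl
      | i + 1 => simpa using hk i (by omega), by simpa using hklt⟩

lemma lexLt_cons_false_true (x y : Seq) : lexLt (cons false x) (cons true y) :=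
  lexLt_of_agree_lt 0 (by omega) rfl rfl

lemma T_lexLt_iff {x y : Seq} : lexLt (T x) (T y) ↔ lexLt x y := by
  constructor
  · rintro ⟨k, hk, hklt⟩
    have hagree : ∀ i < k / 2, x i = y i := by
      intro i hi
      have h2i : 2 * i < k := by omega
      have := hk (2 * i) h2i
      rwa [T_even, T_even] at this
    rcases Nat.even_or_odd k with ⟨j, hj⟩ | ⟨j, hj⟩
    · have hj' : k = 2 * j := by omega
      subst hj'
      rw [T_even, T_even] at hklt
      exact ⟨j, fun i hi => hagree i (by omega), hklt⟩
    · have hj' : k = 2 * j + 1 := by omega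
      subst hj'
      rw [T_odd, T_odd] at hklt
      have := hk (2 * j) (by omega)
      rw [T_even, T_even] at this
      rw [this] at hklt
      exact absurd hklt (lt_irrefl _)
  · rintro ⟨k, hk, hklt⟩
    refine ⟨2 * k, fun i hi => ?_, ?_⟩
    · rcases Nat.even_or_odd i with ⟨j, hj⟩ | ⟨j, hj⟩
      · have : i = 2 * j := by omega
        subst this
        rw [T_even, T_even, hk j (by omega)]
      · have : i = 2 * j + 1 := by omega
        subst this
        rw [T_odd, T_odd, hk j (by omega)]
    · rw [T_even, T_even]; exact hklt

lemma T_injective : Function.Injective T := by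
  intro x y h
  funext i
  have := congrFun h (2 * i)
  rwa [T_even, T_even] at this

lemma cons_injective (b : Bool) : Function.Injective (cons b) := by
  intro x y h
  funext i
  exact congrFun h (i + 1)

lemma cons_lexLe_cons_iff {b : Bool} {x y : Seq} :
    lexLe (cons b x) (cons b y) ↔ lexLe x y := by
  unfold lexLe
  rw [cons_lexLt_cons_iff]
  constructor
  · rintro (h | h)
    · exact Or.inl h
    · exact Or.inr (cons_injective b h)
  · rintro (h | rfl)
    · exact Or.inl h
    · exact Or.inr rfl

lemma T_lexLe_iff {x y : Seq} : lexLe (T x) (T y) ↔ lexLe x y := by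
  unfold lexLe
  rw [T_lexLt_iff]
  constructor
  · rintro (h | h)
    · exact Or.inl h
    · exact Or.inr (T_injective h)
  · rintro (h | rfl)
    · exact Or.inl h
    · exact Or.inr rfl

lemma lexLt_top_iff {x : Seq} : lexLt x (fun _ => true) ↔ ∃ i, x i = false := by
  constructor
  · rintro ⟨k, _, hklt⟩
    exact ⟨k, (bool_lt.mp hklt).1⟩
  · intro hex
    classical
    set k := Nat.find hex with hkdef
    have hle : ∀ i, x i = false → k ≤ i := fun i hc => Nat.find_le hc
    refine ⟨k, fun i hi => ?_, bool_lt.mpr ⟨Nat.find_spec hex, rfl⟩⟩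
    have : x i ≠ false := fun hc => by have := hle i hc; omega
    simpa using this

lemma lexLt_bot_iff {x : Seq} : lexLt (fun _ => false) x ↔ ∃ i, x i = true := by
  constructor
  · rintro ⟨k, _, hklt⟩
    exact ⟨k, (bool_lt.mp hklt).2⟩
  · intro hex
    classical
    set k := Nat.find hex with hkdef
    have hle : ∀ i, x i = true → k ≤ i := fun i hc => Nat.find_le hc
    refine ⟨k, fun i hi => ?_, bool_lt.mpr ⟨rfl, Nat.find_spec hex⟩⟩
    have : x i ≠ true := fun hc => by have := hle i hc; omega
    simp only [eq_comm]
    simpa using this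

lemma lexLe_top (x : Seq) : lexLe x (fun _ => true) := by
  by_cases h : x = fun _ => true
  · exact Or.inr h
  · left
    rw [lexLt_top_iff]
    by_contra hc
    push_neg at hc
    exact h (funext fun i => by simpa using hc i)



def Ssig (b : Seq) : Set Seq :=
  {y | ∀ m : ℕ, (y m = false → lexLt (shift^[m+1] y) b) ∧
       (y m = true → lexLt (mirror b) (shift^[m+1] y))}

def bSeq : ℕ → Seq
  | 0 => fun _ => true
  | j + 1 => cons true (T (bSeq j))

lemma bSeq_zero : bSeq 0 = fun _ => true := rfl
lemma bSeq_succ (j : ℕ) : bSeq (j + 1) = cons true (T (bSeq j)) := rfl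

lemma bSeq_first (j : ℕ) : bSeq j 0 = true := by
  cases j with
  | zero => rfl
  | succ j => rfl

lemma shift_T_even (z : Seq) (j : ℕ) : shift^[2 * j] (T z) = T (shift^[j] z) := by
  funext i
  rw [shift_iter]
  rcases Nat.even_or_odd i with ⟨l, hl⟩ | ⟨l, hl⟩
  · have h1 : 2 * j + i = 2 * (j + l) := by omega
    have h2 : i = 2 * l := by omega
    rw [h1, h2, T_even, T_even, shift_iter]
  · have h1 : 2 * j + i = 2 * (j + l) + 1 := by omega
    have h2 : i = 2 * l + 1 := by omega
    rw [h1, h2, T_odd, T_odd, shift_iter]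

lemma shift_T_odd (z : Seq) (j : ℕ) :
    shift^[2 * j + 1] (T z) = cons (!(z j)) (T (shift^[j + 1] z)) := by
  funext i
  rw [shift_iter]
  match i with
  | 0 => rw [show 2 * j + 1 + 0 = 2 * j + 1 by ring, T_odd]; rfl
  | Nat.succ l =>
    rw [cons_succ]
    rcases Nat.even_or_odd l with ⟨m, hm⟩ | ⟨m, hm⟩
    · have h1 : 2 * j + 1 + (l + 1) = 2 * (j + 1 + m) := by omega
      have h2 : l = 2 * m := by omega
      rw [h1, h2, T_even, T_even, shift_iter]
    · have h1 : 2 * j + 1 + (l + 1) = 2 * (j + 1 + m) + 1 := by omega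
      have h2 : l = 2 * m + 1 := by omega
      rw [h1, h2, T_odd, T_odd, shift_iter]

lemma T_apply_zero (u : Seq) : T u 0 = u 0 := by
  simpa using T_even u 0

lemma T_apply_one (u : Seq) : T u 1 = !(u 0) := by
  simpa using T_odd u 0

lemma T_lt_cons {b : Seq} (hb : b 0 = true) (u : Seq) :
    lexLt (T u) (cons true (T b)) := by
  cases hu : u 0 with
  | false =>
    refine lexLt_of_agree_lt 0 (by omega) ?_ rfl
    rw [T_apply_zero, hu]
  | true =>
    refine lexLt_of_agree_lt 1 (fun i hi => ?_) ?_ ?_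
    · have : i = 0 := by omega
      subst this
      rw [T_apply_zero, hu]; rfl
    · rw [T_apply_one, hu]; rfl
    · show T b 0 = true
      rw [T_apply_zero, hb]

lemma cons_lt_T {b : Seq} (hb : b 0 = true) (u : Seq) :
    lexLt (cons false (T (mirror b))) (T u) := by
  have h := T_lt_cons hb (mirror u)
  have key : lexLt (mirror (cons true (T b))) (mirror (T (mirror u))) ↔
      lexLt (T (mirror u)) (cons true (T b)) := lexLt_mirror_iff
  have h2 := key.mpr h
  rw [mirror_cons, mirror_T, mirror_T, mirror_mirror] at h2
  exact h2

lemma Sigma_T {b : Seq} (hb : b 0 = true) {z : Seq} (hz : z ∈ Ssig b) :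
    T z ∈ SigmaA (cons true (T b)) := by
  intro n
  rcases Nat.even_or_odd n with ⟨j, hj⟩ | ⟨j, hj⟩
  · have hn : n = 2 * j := by omega
    subst hn
    rw [shift_T_even]
    constructor
    · rw [mirror_cons, mirror_T]
      exact cons_lt_T hb _
    · exact T_lt_cons hb _
  · have hn : n = 2 * j + 1 := by omega
    subst hn
    rw [shift_T_odd]
    cases hzj : z j with
    | false =>
      constructor
      · rw [mirror_cons, mirror_T]
        simp only [Bool.not_false]
        exact lexLt_cons_false_true _ _
      · simp only [Bool.not_false]
        rw [cons_lexLt_cons_iff, T_lexLt_iff]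
        exact (hz j).1 hzj
    | true =>
      constructor
      · rw [mirror_cons, mirror_T]
        simp only [Bool.not_true]
        rw [cons_lexLt_cons_iff, T_lexLt_iff]
        exact (hz j).2 hzj
      · simp only [Bool.not_true]
        exact lexLt_cons_false_true _ _

lemma S_lift {b : Seq} (hb : b 0 = true) {z : Seq} (hz : z ∈ Ssig b) :
    T z ∈ Ssig (cons true (T b)) := by
  intro m
  rcases Nat.even_or_odd m with ⟨j, hj⟩ | ⟨j, hj⟩
  · have hm : m = 2 * j := by omega
    subst hm
    rw [T_even]
    constructor
    · intro hzj
      rw [show 2 * j + 1 = 2 * j + 1 by rfl, shift_T_odd, hzj]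
      simp only [Bool.not_false]
      rw [cons_lexLt_cons_iff, T_lexLt_iff]
      exact (hz j).1 hzj
    · intro hzj
      rw [shift_T_odd, hzj, mirror_cons, mirror_T]
      simp only [Bool.not_true]
      rw [cons_lexLt_cons_iff, T_lexLt_iff]
      exact (hz j).2 hzj
  · have hm : m = 2 * j + 1 := by omega
    subst hm
    rw [T_odd]
    constructor
    · intro _
      rw [show 2 * j + 1 + 1 = 2 * (j + 1) by ring, shift_T_even]
      exact T_lt_cons hb _
    · intro _
      rw [show 2 * j + 1 + 1 = 2 * (j + 1) by ring, shift_T_even, mirror_cons, mirror_T]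
      exact cons_lt_T hb _

lemma tail_mem_Ssig {b' : Seq} {y z : Seq} {s : ℕ}
    (hy : y ∈ Ssig (cons true (T b'))) (htail : ∀ i, y (s + i) = T z i) :
    z ∈ Ssig b' := by
  intro j
  have hym : y (s + 2 * j) = z j := by rw [htail, T_even]
  have hshift : shift^[s + 2 * j + 1] y = cons (!(z j)) (T (shift^[j + 1] z)) := by
    funext i
    rw [shift_iter, show s + 2 * j + 1 + i = s + (2 * j + 1 + i) by ring, htail,
      ← shift_iter (2 * j + 1) (T z) i, shift_T_odd]
  constructor
  · intro hzj
    have := (hy (s + 2 * j)).1 (by rw [hym]; exact hzj)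
    rw [hshift, hzj] at this
    simp only [Bool.not_false] at this
    rw [cons_lexLt_cons_iff, T_lexLt_iff] at this
    exact this
  · intro hzj
    have := (hy (s + 2 * j)).2 (by rw [hym]; exact hzj)
    rw [hshift, hzj, mirror_cons, mirror_T] at this
    simp only [Bool.not_true] at this
    rw [cons_lexLt_cons_iff, T_lexLt_iff] at this
    exact this

lemma SigmaA_sub_Ssig (a : Seq) : SigmaA a ⊆ Ssig a := by
  intro y hy m
  exact ⟨fun _ => (hy (m + 1)).2, fun _ => (hy (m + 1)).1⟩


lemma tm_zero : thueMorse 0 = false := by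
  simp [thueMorse]

lemma tm_odd (n : ℕ) : thueMorse (2 * n + 1) = !thueMorse n := by
  unfold thueMorse
  rw [Nat.digits_def' (by norm_num : 1 < 2) (by omega)]
  have h1 : (2 * n + 1) % 2 = 1 := by omega
  have h2 : (2 * n + 1) / 2 = n := by omega
  rw [h1, h2, List.count_cons]
  set c := (Nat.digits 2 n).count 1 with hc
  cases h : decide (c % 2 = 1) <;> simp_all <;> omega

lemma tm_even (n : ℕ) : thueMorse (2 * n) = thueMorse n := by
  rcases Nat.eq_zero_or_pos n with rfl | hn
  · rfl
  unfold thueMorse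
  rw [Nat.digits_def' (by norm_num : 1 < 2) (by omega)]
  have h1 : (2 * n) % 2 = 0 := by omega
  have h2 : (2 * n) / 2 = n := by omega
  rw [h1, h2, List.count_cons]
  simp

lemma tm_one : thueMorse 1 = true := by
  have := tm_odd 0
  rw [tm_zero] at this
  simpa using this

lemma tm_pow (k : ℕ) : thueMorse (2 ^ k) = true := by
  induction k with
  | zero => exact tm_one
  | succ k ih =>
    have : (2 : ℕ) ^ (k + 1) = 2 * 2 ^ k := by ring
    rw [this, tm_even, ih]

lemma astar_apply (i : ℕ) : astar i = thueMorse (i + 1) := rfl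

lemma astar_zero : astar 0 = true := tm_one

lemma astar_one : astar 1 = true := by
  rw [astar_apply, show (1:ℕ) + 1 = 2 * 1 from rfl, tm_even, tm_one]

/-- Closed form for `triple (astarWord k)`. -/
def Aseq (k : ℕ) : Seq := fun i =>
  if i < 2 ^ k then astar i
  else if i % 2 ^ k = 2 ^ k - 1 then true
  else !(astar (i % 2 ^ k))

lemma astarWord_length (k : ℕ) : (astarWord k).length = 2 ^ k := by
  simp [astarWord]

lemma astarWord_getD (k i : ℕ) (hi : i < 2 ^ k) :
    (astarWord k).getD i false = astar i := by
  rw [List.getD_eq_getElem _ _ (by rw [astarWord_length]; exact hi)]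
  simp [astarWord]

lemma triple_eq_Aseq (k : ℕ) (hk : 1 ≤ k) : triple (astarWord k) = Aseq k := by
  have hm : 2 ≤ 2 ^ k := by
    calc 2 = 2 ^ 1 := by norm_num
    _ ≤ 2 ^ k := Nat.pow_le_pow_right (by norm_num) hk
  funext i
  unfold triple Aseq
  rw [astarWord_length]
  rw [if_neg (by omega)]
  by_cases hi : i < 2 ^ k
  · rw [if_pos hi, if_pos hi, astarWord_getD k i hi]
  · rw [if_neg hi, if_neg hi]
    have hsub : (i - 2 ^ k) % 2 ^ k = i % 2 ^ k := by
      obtain ⟨d, hd⟩ : ∃ d, i = 2 ^ k + d := ⟨i - 2 ^ k, by omega⟩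
      subst hd
      simp [Nat.add_mod_left]
    rw [hsub]
    by_cases hmod : i % 2 ^ k = 2 ^ k - 1
    · rw [if_pos hmod, if_pos hmod]
    · rw [if_neg hmod, if_neg hmod, astarWord_getD k _ (Nat.mod_lt _ (by omega))]

lemma Aseq_one : Aseq 1 = bSeq 1 := by
  funext i
  have h2 : (2:ℕ) ^ 1 = 2 := by norm_num
  unfold Aseq
  rw [h2]
  rw [bSeq_succ, bSeq_zero]
  match i with
  | 0 =>
    rw [if_pos (by omega)]
    exact astar_zero
  | 1 =>
    rw [if_pos (by omega)]
    show astar 1 = T (fun _ => true) 0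
    rw [T_apply_zero, astar_one]
  | (n + 2) =>
    rw [if_neg (by omega)]
    show _ = T (fun _ => true) (n + 1)
    rcases Nat.even_or_odd n with ⟨l, hl⟩ | ⟨l, hl⟩
    · -- n even : i even, T at odd index n+1
      have he : n + 1 = 2 * l + 1 := by omega
      rw [he, T_odd]
      have hmod : (n + 2) % 2 = 0 := by omega
      rw [if_neg (by omega), hmod]
      show (!astar 0) = !(fun _ => true) l
      rw [astar_zero]
    · have he : n + 1 = 2 * (l + 1) := by omega
      rw [he, T_even]
      have hmod : (n + 2) % 2 = 1 := by omega
      rw [if_pos (by omega)]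

lemma Aseq_lo {k i : ℕ} (hi : i < 2 ^ k) : Aseq k i = astar i := by
  unfold Aseq; rw [if_pos hi]

lemma Aseq_hi_last {k i : ℕ} (hi : ¬ i < 2 ^ k) (h : i % 2 ^ k = 2 ^ k - 1) :
    Aseq k i = true := by
  unfold Aseq; rw [if_neg hi, if_pos h]

lemma Aseq_hi {k i : ℕ} (hi : ¬ i < 2 ^ k) (h : ¬ i % 2 ^ k = 2 ^ k - 1) :
    Aseq k i = !astar (i % 2 ^ k) := by
  unfold Aseq; rw [if_neg hi, if_neg h]

lemma Aseq_succ (k : ℕ) (hk : 1 ≤ k) : Aseq (k + 1) = cons true (T (Aseq k)) := by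
  have hm : 2 ≤ 2 ^ k := by
    calc 2 = 2 ^ 1 := by norm_num
    _ ≤ 2 ^ k := Nat.pow_le_pow_right (by norm_num) hk
  have hmm : (2:ℕ) ^ (k + 1) = 2 * 2 ^ k := by ring
  funext i
  match i with
  | 0 =>
    show Aseq (k+1) 0 = true
    rw [Aseq_lo (by positivity)]
    exact astar_zero
  | (i + 1) =>
    rw [cons_succ]
    rcases Nat.even_or_odd i with ⟨j, hj⟩ | ⟨j, hj⟩
    · -- index i+1 = 2j+1, RHS = Aseq k j
      have hi1 : i + 1 = 2 * j + 1 := by omega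
      have hT : T (Aseq k) i = Aseq k j := by
        rw [show i = 2 * j by omega, T_even]
      rw [hT]
      by_cases hjm : j < 2 ^ k
      · rw [Aseq_lo (show i + 1 < 2 ^ (k+1) by rw [hmm]; omega), Aseq_lo hjm, hi1]
        rw [astar_apply, astar_apply, show 2 * j + 1 + 1 = 2 * (j + 1) by ring, tm_even]
      · have hρ : j % 2 ^ k < 2 ^ k := Nat.mod_lt _ (by omega)
        have hq := (Nat.div_add_mod j (2 ^ k)).symm
        have hmul : 2 * 2 ^ k * (j / 2 ^ k) = 2 * (2 ^ k * (j / 2 ^ k)) := by ring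
        have hiq : i + 1 = 2 * 2 ^ k * (j / 2 ^ k) + (2 * (j % 2 ^ k) + 1) := by omega
        have himod : (i + 1) % (2 ^ (k+1)) = 2 * (j % 2 ^ k) + 1 := by
          rw [hmm, hiq, Nat.mul_add_mod, Nat.mod_eq_of_lt (by omega)]
        have hbig : ¬ i + 1 < 2 ^ (k + 1) := by rw [hmm]; omega
        by_cases hρm : j % 2 ^ k = 2 ^ k - 1
        · rw [Aseq_hi_last hbig (by rw [himod, hmm]; omega), Aseq_hi_last hjm hρm]
        · rw [Aseq_hi hbig (by rw [himod, hmm]; omega), Aseq_hi hjm hρm, himod]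
          rw [astar_apply, astar_apply,
            show 2 * (j % 2 ^ k) + 1 + 1 = 2 * (j % 2 ^ k + 1) by ring, tm_even]
    · -- index i+1 = 2j+2, RHS = !(Aseq k j)
      have hi1 : i + 1 = 2 * j + 2 := by omega
      have hT : T (Aseq k) i = !(Aseq k j) := by
        rw [show i = 2 * j + 1 by omega, T_odd]
      rw [hT]
      by_cases hjm : j + 1 < 2 ^ k
      · rw [Aseq_lo (show i + 1 < 2 ^ (k+1) by rw [hmm]; omega),
          Aseq_lo (show j < 2 ^ k by omega), hi1]
        rw [astar_apply, astar_apply, show 2 * j + 2 + 1 = 2 * (j + 1) + 1 by ring, tm_odd]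
      · by_cases hje : j + 1 = 2 ^ k
        · have hieq : i + 1 = 2 * 2 ^ k := by omega
          have himod : (i + 1) % (2 ^ (k+1)) = 0 := by
            rw [hmm, hieq, Nat.mod_self]
          have hbig : ¬ i + 1 < 2 ^ (k + 1) := by rw [hmm]; omega
          rw [Aseq_hi hbig (by rw [himod, hmm]; omega), himod,
            Aseq_lo (show j < 2 ^ k by omega)]
          have hA : astar j = true := by
            rw [astar_apply, hje, tm_pow]
          rw [hA, astar_zero]
        · have hjm' : 2 ^ k ≤ j := by omega
          have hρ : j % 2 ^ k < 2 ^ k := Nat.mod_lt _ (by omega)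
          have hq := (Nat.div_add_mod j (2 ^ k)).symm
          have hmul : 2 * 2 ^ k * (j / 2 ^ k) = 2 * (2 ^ k * (j / 2 ^ k)) := by ring
          have hbig : ¬ i + 1 < 2 ^ (k + 1) := by rw [hmm]; omega
          by_cases hρm : j % 2 ^ k = 2 ^ k - 1
          · have hmul2 : 2 * 2 ^ k * (j / 2 ^ k + 1) = 2 * (2 ^ k * (j / 2 ^ k)) + 2 * 2 ^ k := by
              ring
            have hiq : i + 1 = 2 * 2 ^ k * (j / 2 ^ k + 1) := by omega
            have himod : (i + 1) % (2 ^ (k+1)) = 0 := by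
              rw [hmm, hiq, Nat.mul_mod_right]
            rw [Aseq_hi hbig (by rw [himod, hmm]; omega), himod,
              Aseq_hi_last (show ¬ j < 2 ^ k by omega) hρm]
            rw [astar_zero]
          · have hiq : i + 1 = 2 * 2 ^ k * (j / 2 ^ k) + (2 * (j % 2 ^ k) + 2) := by omega
            have himod : (i + 1) % (2 ^ (k+1)) = 2 * (j % 2 ^ k) + 2 := by
              rw [hmm, hiq, Nat.mul_add_mod, Nat.mod_eq_of_lt (by omega)]
            rw [Aseq_hi hbig (by rw [himod, hmm]; omega), himod,
              Aseq_hi (show ¬ j < 2 ^ k by omega) hρm]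
            rw [astar_apply, astar_apply,
              show 2 * (j % 2 ^ k) + 2 + 1 = 2 * (j % 2 ^ k + 1) + 1 by ring, tm_odd]

lemma Aseq_eq_bSeq (k : ℕ) (hk : 1 ≤ k) : Aseq k = bSeq k := by
  induction k with
  | zero => omega
  | succ k ih =>
    rcases Nat.eq_zero_or_pos k with rfl | hkpos
    · exact Aseq_one
    · rw [Aseq_succ k hkpos, bSeq_succ, ih hkpos]

lemma triple_astarWord_eq (k : ℕ) (hk : 1 ≤ k) : triple (astarWord k) = bSeq k :=
  (triple_eq_Aseq k hk).trans (Aseq_eq_bSeq k hk)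


lemma a1_at (t : ℕ) : bSeq 1 t = decide (t = 0 ∨ t % 2 = 1) := by
  rw [bSeq_succ, bSeq_zero]
  match t with
  | 0 => rfl
  | (n + 1) =>
    rw [cons_succ]
    rcases Nat.even_or_odd n with ⟨l, hl⟩ | ⟨l, hl⟩
    · rw [show n = 2 * l by omega, T_even]
      simp
    · rw [show n = 2 * l + 1 by omega, T_odd]
      simp
      omega

lemma bSeq_one_apply (j : ℕ) (hj : 1 ≤ j) : bSeq j 1 = true := by
  match j, hj with
  | (j + 1), _ =>
    rw [bSeq_succ]
    show T (bSeq j) 0 = true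
    rw [T_apply_zero, bSeq_first]

lemma bSeq_le_one (j : ℕ) (hj : 1 ≤ j) : lexLe (bSeq j) (bSeq 1) := by
  match j, hj with
  | (j + 1), _ =>
    rw [bSeq_succ, bSeq_succ, bSeq_zero, cons_lexLe_cons_iff, T_lexLe_iff]
    exact lexLe_top _

lemma window_gt {b Y : Seq} (hble : lexLe b (bSeq 1)) (d : ℕ) (hd : d % 2 = 1)
    (hY : ∀ t ≤ d, Y t = bSeq 1 t) (hYd1 : Y (d + 1) = true) : lexLt b Y := by
  have ha1d1 : bSeq 1 (d + 1) = false := by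
    rw [a1_at]
    simp
    omega
  rcases hble with hlt | rfl
  · obtain ⟨J, hJ, hJlt⟩ := hlt
    have hJf : b J = false := (bool_lt.mp hJlt).1
    have hJt : bSeq 1 J = true := (bool_lt.mp hJlt).2
    by_cases hJd : J ≤ d
    · refine ⟨J, fun i hi => ?_, ?_⟩
      · rw [hJ i hi, hY i (by omega)]
      · rw [bool_lt]
        exact ⟨hJf, by rw [hY J hJd]; exact hJt⟩
    · refine ⟨d + 1, fun i hi => ?_, ?_⟩
      · rw [hJ i (by omega), hY i (by omega)]
      · rw [bool_lt]
        refine ⟨?_, hYd1⟩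
        by_cases hJe : J = d + 1
        · rw [← hJe]; exact hJf
        · rw [hJ (d + 1) (by omega)]; exact ha1d1
  · refine ⟨d + 1, fun i hi => ?_, ?_⟩
    · rw [hY i (by omega)]
    · rw [bool_lt]
      exact ⟨ha1d1, hYd1⟩

/-- Clean window lemma: a pair, strict alternation for `d` steps (d odd), then a pair,
forces the sequence to be constant up to the start of the window. -/
lemma M1 {b y : Seq} (hble : lexLe b (bSeq 1)) (hy : y ∈ Ssig b) :
    ∀ p, ∀ d, d % 2 = 1 → y p = y (p + 1) →
      (∀ t, p + 1 ≤ t → t < p + d → y (t + 1) = !(y t)) →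
      y (p + d) = y (p + d + 1) → ∀ t ≤ p + 1, y t = y 0 := by
  intro p
  induction p using Nat.strong_induction_on with
  | _ p ih =>
    intro d hd hpair halt hpair2 t ht
    -- the window pattern
    have hv : ∀ s, 1 ≤ s → s ≤ d → y (p + s) = (if s % 2 = 1 then y p else !(y p)) := by
      intro s hs1 hsd
      induction s with
      | zero => omega
      | succ s ihs =>
        rcases Nat.eq_zero_or_pos s with rfl | hs
        · simpa using hpair.symm
        · have hprev := ihs (by omega) (by omega)
          have hstep := halt (p + s) (by omega) (by omega)
          rw [show p + s + 1 = p + (s + 1) by ring] at hstep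
          rw [hstep, hprev]
          rcases Nat.even_or_odd s with ⟨l, hl⟩ | ⟨l, hl⟩
          · rw [if_neg (by omega), if_pos (by omega)]
            simp
          · rw [if_pos (by omega), if_neg (by omega)]
    match p, ht with
    | 0, ht =>
      -- t ≤ 1
      interval_cases t
      · rfl
      · exact hpair.symm
    | (p' + 1), ht =>
      -- look at y p'
      set p := p' + 1 with hpdef
      by_cases hc : y p' = y p
      · -- pair at p', apply ih with window d = 1
        have hconst := ih p' (by omega) 1 (by omega) (by rw [show p' + 1 = p from rfl]; exact hc)
          (fun t h1 h2 => by omega) (by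
            rw [show p' + 1 = p from rfl, show p' + 1 + 1 = p + 1 from rfl]
            exact hpair)
        -- hconst : ∀ t ≤ p' + 1, y t = y 0
        have hyp : y p = y 0 := hconst p (by omega)
        by_cases htp : t ≤ p
        · exact hconst t htp
        · have : t = p + 1 := by omega
          rw [this, ← hpair, hyp]
      · -- contradiction via lex
        exfalso
        have hcases : y p' = !(y p) := by
          cases hyp' : y p' <;> cases hyp : y p <;> simp_all
        have hYpat : ∀ s ≤ d, (shift^[p' + 1] y) s = (if s = 0 ∨ s % 2 = 1 then y p else !(y p)) := by
          intro s hs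
          rw [shift_iter, show p' + 1 + s = p + s by rw [hpdef]]
          rcases Nat.eq_zero_or_pos s with rfl | hs1
          · simp
          · rw [hv s hs1 hs]
            by_cases hso : s % 2 = 1
            · rw [if_pos hso, if_pos (by omega)]
            · rw [if_neg hso, if_neg (by omega)]
        have hYd1 : (shift^[p' + 1] y) (d + 1) = y p := by
          rw [shift_iter, show p' + 1 + (d + 1) = p + d + 1 by omega, ← hpair2,
            hv d (by omega) (by omega), if_pos hd]
        cases hvp : y p with
        | true =>
          -- y p' = false, Ssig gives shift^[p'+1] y ≺ b, but window_gt gives b ≺ it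
          have hlt := (hy p').1 (by rw [hcases, hvp]; rfl)
          have hgt : lexLt b (shift^[p' + 1] y) := by
            refine window_gt hble d hd (fun s hs => ?_) (by rw [hYd1, hvp])
            rw [hYpat s hs, a1_at]
            by_cases h0 : s = 0 ∨ s % 2 = 1
            · rw [if_pos h0, hvp]
              simp [h0]
            · rw [if_neg h0, hvp]
              simp
              omega
          exact lexLt_asymm hlt hgt
        | false =>
          have hlt := (hy p').2 (by rw [hcases, hvp]; rfl)
          -- mirror trick
          have hlt' : lexLt (mirror (shift^[p' + 1] y)) b := by
            have := lexLt_mirror_iff (x := shift^[p' + 1] y) (y := mirror b)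
            rw [mirror_mirror] at this
            exact this.mpr hlt
          have hgt : lexLt b (mirror (shift^[p' + 1] y)) := by
            refine window_gt hble d hd (fun s hs => ?_) ?_
            · have hms : mirror (shift^[p' + 1] y) s = !((shift^[p' + 1] y) s) := rfl
              rw [hms, hYpat s hs, a1_at]
              by_cases h0 : s = 0 ∨ s % 2 = 1
              · rw [if_pos h0, hvp]
                simp [h0]
              · rw [if_neg h0, hvp]
                simp
                omega
            · have hms : mirror (shift^[p' + 1] y) (d + 1) = !((shift^[p' + 1] y) (d + 1)) := rfl
              rw [hms, hYd1, hvp]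
              rfl
          exact lexLt_asymm hlt' hgt

/-- Reduction to a clean window. -/
lemma M0 {y : Seq} :
    ∀ g p q, q - p = g → p < q → (q - p) % 2 = 1 → y p = y (p + 1) → y q = y (q + 1) →
    ∃ p' q', p ≤ p' ∧ p' < q' ∧ (q' - p') % 2 = 1 ∧ y p' = y (p' + 1) ∧ y q' = y (q' + 1) ∧
      (∀ t, p' < t → t < q' → y t ≠ y (t + 1)) := by
  intro g
  induction g using Nat.strong_induction_on with
  | _ g ih =>
    intro p q hg hpq hodd hp hq
    by_cases hmid : ∃ t, p < t ∧ t < q ∧ y t = y (t + 1)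
    · obtain ⟨t, htp, htq, hpt⟩ := hmid
      by_cases hto : (t - p) % 2 = 1
      · obtain ⟨p', q', h1, h2, h3, h4, h5, h6⟩ :=
          ih (t - p) (by omega) p t rfl htp hto hp hpt
        exact ⟨p', q', h1, h2, h3, h4, h5, h6⟩
      · obtain ⟨p', q', h1, h2, h3, h4, h5, h6⟩ :=
          ih (q - t) (by omega) t q rfl htq (by omega) hpt hq
        exact ⟨p', q', by omega, h2, h3, h4, h5, h6⟩
    · push_neg at hmid
      exact ⟨p, q, le_refl _, hpq, hodd, hp, hq, fun t h1 h2 h3 => hmid t h1 h2 h3⟩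

/-- Two pairs at odd distance force a constant prefix. -/
lemma pairs_const {b y : Seq} (hble : lexLe b (bSeq 1)) (hy : y ∈ Ssig b)
    {p q : ℕ} (hpq : p < q) (hodd : (q - p) % 2 = 1)
    (hp : y p = y (p + 1)) (hq : y q = y (q + 1)) : ∀ t ≤ p + 1, y t = y 0 := by
  obtain ⟨p', q', h1, h2, h3, h4, h5, h6⟩ := M0 (q - p) p q rfl hpq hodd hp hq
  have halt : ∀ t, p' + 1 ≤ t → t < p' + (q' - p') → y (t + 1) = !(y t) := by
    intro t ht1 ht2
    have hne := h6 t (by omega) (by omega)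
    cases h : y t <;> cases h' : y (t + 1) <;> simp_all
  have := M1 hble hy p' (q' - p') h3 h4 halt
    (by rw [show p' + (q' - p') = q' by omega]; exact h5)
  intro t ht
  exact this t (by omega)


lemma bool_ne_not {a b : Bool} (h : ¬ a = !b) : a = b := by
  revert h; cases a <;> cases b <;> decide

lemma bool_ne {a b : Bool} (h : ¬ a = b) : a = !b := by
  revert h; cases a <;> cases b <;> decide

/-- Decomposition of elements of `Ssig b`. -/
lemma decomp {b y : Seq} (hble : lexLe b (bSeq 1)) (hy : y ∈ Ssig b) :
    (∀ i, y i = y 0) ∨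
    ∃ (v : Bool) (r s : ℕ) (z : Seq), r ≤ s ∧ s ≤ r + 1 ∧
      (∀ i < r, y i = v) ∧ (∀ i, r ≤ i → i < s → y i = !v) ∧
      (∀ i, y (s + i) = T z i) := by
  by_cases hconst : ∀ i, y i = y 0
  · exact Or.inl hconst
  right
  push_neg at hconst
  classical
  have hex : ∃ i, y i ≠ y 0 := hconst
  set r := Nat.find hex with hrdef
  have hr : y r ≠ y 0 := Nat.find_spec hex
  have hrle : ∀ i, y i ≠ y 0 → r ≤ i := fun i h => Nat.find_le h
  have hrlt : ∀ i < r, y i = y 0 := by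
    intro i hi
    by_contra hne
    have := hrle i hne
    omega
  have hr1 : 1 ≤ r := by
    rcases Nat.eq_zero_or_pos r with h0 | h1
    · exfalso; apply hr; rw [h0]
    · exact h1
  -- no two pairs at odd distance in region ≥ r
  have hnopair : ∀ P Q, r ≤ P → P < Q → (Q - P) % 2 = 1 →
      y P = y (P + 1) → y Q = y (Q + 1) → False := by
    intro P Q hrP hPQ hodd hP hQ
    have := pairs_const hble hy hPQ hodd hP hQ r (by omega)
    exact hr this
  by_cases hA : ∀ j, y (r + (2 * j + 1)) = !(y (r + 2 * j))
  · -- y from r on is a T-image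
    refine ⟨y 0, r, r, fun j => y (r + 2 * j), le_refl r, by omega, hrlt, by omega, ?_⟩
    intro i
    rcases Nat.even_or_odd i with ⟨l, hl⟩ | ⟨l, hl⟩
    · rw [show i = 2 * l by omega, T_even]
    · rw [show i = 2 * l + 1 by omega, T_odd]
      exact hA l
  · push_neg at hA
    obtain ⟨j0, hj0⟩ := hA
    have hj0' : y (r + 2 * j0 + 1) = y (r + 2 * j0) := by
      rw [show r + 2 * j0 + 1 = r + (2 * j0 + 1) by ring]
      exact bool_ne_not hj0
    have hB : ∀ j, y (r + 2 * j + 2) = !(y (r + 2 * j + 1)) := by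
      intro j
      by_contra hj1
      have hj1' : y (r + 2 * j + 2) = y (r + 2 * j + 1) := by
        exact bool_ne_not hj1
      -- pairs at P := r + 2*j0 and Q := r + 2*j + 1, odd distance
      rcases lt_trichotomy (r + 2 * j0) (r + 2 * j + 1) with hlt | heq | hgt
      · exact hnopair (r + 2 * j0) (r + 2 * j + 1) (by omega) hlt (by omega)
          (by rw [hj0']) (by rw [show r + 2 * j + 1 + 1 = r + 2 * j + 2 by ring, hj1'])
      · omega
      · exact hnopair (r + 2 * j + 1) (r + 2 * j0) (by omega) hgt (by omega)
          (by rw [show r + 2 * j + 1 + 1 = r + 2 * j + 2 by ring, hj1'])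
          (by rw [hj0'])
    -- y from r+1 on is a T-image
    refine ⟨y 0, r, r + 1, fun j => y (r + 2 * j + 1), by omega, by omega, hrlt, ?_, ?_⟩
    · intro i h1 h2
      have hir : i = r := by omega
      rw [hir]
      exact bool_ne hr
    · intro i
      rcases Nat.even_or_odd i with ⟨l, hl⟩ | ⟨l, hl⟩
      · rw [show i = 2 * l by omega, T_even, show r + 1 + 2 * l = r + 2 * l + 1 by ring]
      · rw [show i = 2 * l + 1 by omega, T_odd,
          show r + 1 + (2 * l + 1) = r + 2 * l + 2 by ring]
        exact hB l


lemma bword_finite (S : Set Seq) (n : ℕ) : (Bword S n).Finite := by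
  apply Set.Finite.subset (List.finite_length_eq Bool n)
  intro w hw
  exact hw.1

lemma bword_card_le (S : Set Seq) (n : ℕ) : (Bword S n).ncard ≤ 2 ^ n := by
  have h1 : (Bword S n).ncard ≤ (Set.univ : Set (Fin n → Bool)).ncard := by
    apply Set.ncard_le_ncard_of_injOn (fun w => (fun i => w.getD i false))
    · intro a _; trivial
    · intro w1 h1 w2 h2 heq
      apply List.ext_getElem (by rw [h1.1, h2.1])
      intro j hj1 hj2
      have h : w1.getD j false = w2.getD j false :=
        congrFun heq ⟨j, by rw [← h1.1]; exact hj1⟩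
      rw [List.getD_eq_getElem _ _ hj1, List.getD_eq_getElem _ _ hj2] at h
      exact h
  rw [Set.ncard_univ] at h1
  simpa [Nat.card_eq_fintype_card] using h1

lemma window_mem {S : Set Seq} {x : Seq} (hx : x ∈ S) (i n : ℕ) :
    (List.ofFn fun j : Fin n => x (i + (j : ℕ))) ∈ Bword S n := by
  refine ⟨by simp, x, hx, i, fun j hj => ?_⟩
  have hj' : j < (List.ofFn fun j : Fin n => x (i + (j : ℕ))).length := by simpa using hj
  rw [List.getD_eq_getElem _ _ hj']
  simp

lemma bword_mono {S S' : Set Seq} (h : S ⊆ S') (n : ℕ) : Bword S n ⊆ Bword S' n := by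
  rintro w ⟨hlen, x, hx, hocc⟩
  exact ⟨hlen, x, h hx, hocc⟩

/-- decoding entry of the interleaved expansion -/
def expandEntry (p : Bool) (u : List Bool) (l : ℕ) : Bool :=
  if (l + (if p then 1 else 0)) % 2 = 0 then u.getD ((l + (if p then 1 else 0)) / 2) false
  else !(u.getD ((l + (if p then 1 else 0)) / 2) false)

/-- decoding map -/
def decF (n t : ℕ) (v q p : Bool) (u : List Bool) : List Bool :=
  List.ofFn (fun j : Fin n =>
    if (j : ℕ) < t then v
    else if (j : ℕ) = t ∧ q = true then !v
    else expandEntry p u ((j : ℕ) - t - (if q then 1 else 0)))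

lemma expand_eq (z : Seq) (e m l : ℕ) (hl : l + e % 2 < 2 * m) :
    expandEntry (decide (e % 2 = 1)) (List.ofFn fun a : Fin m => z (e / 2 + (a : ℕ))) l
      = T z (e + l) := by
  unfold expandEntry T
  have hp : (if decide (e % 2 = 1) = true then 1 else 0) = e % 2 := by
    rcases Nat.mod_two_eq_zero_or_one e with h | h <;> simp [h]
  rw [hp]
  have hdiv : (l + e % 2) / 2 < m := by omega
  have hgd : (List.ofFn fun a : Fin m => z (e / 2 + (a : ℕ))).getD ((l + e % 2) / 2) false
      = z (e / 2 + (l + e % 2) / 2) := by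
    rw [List.getD_eq_getElem _ _ (by simpa using hdiv)]
    simp
  rw [hgd]
  have hmod : (e + l) % 2 = (l + e % 2) % 2 := by omega
  have hdiv2 : (e + l) / 2 = e / 2 + (l + e % 2) / 2 := by omega
  by_cases hI : (l + e % 2) % 2 = 0
  · rw [if_pos hI, if_pos (by omega), hdiv2]
  · rw [if_neg hI, if_neg (by omega), hdiv2]

/-- The main counting step. -/
lemma count_step {S S' : Set Seq}
    (hdec : ∀ y ∈ S, (∀ i, y i = y 0) ∨
      ∃ (v : Bool) (r s : ℕ) (z : Seq), r ≤ s ∧ s ≤ r + 1 ∧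
        (∀ i < r, y i = v) ∧ (∀ i, r ≤ i → i < s → y i = !v) ∧
        (∀ i, y (s + i) = T z i) ∧ z ∈ S')
    {n m : ℕ} (hm : n + 2 ≤ 2 * m) :
    (Bword S n).ncard ≤ 2 + (n + 1) * 8 * (Bword S' m).ncard := by
  classical
  set B' := (bword_finite S' m).toFinset with hB'
  have hB'card : B'.card = (Bword S' m).ncard :=
    (Set.ncard_eq_toFinset_card _ (bword_finite S' m)).symm
  set P := (Finset.range (n+1)) ×ˢ (Finset.univ : Finset Bool) ×ˢ (Finset.univ : Finset Bool)
      ×ˢ (Finset.univ : Finset Bool) ×ˢ B' with hP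
  set F := P.image (fun c : ℕ × Bool × Bool × Bool × List Bool =>
    decF n c.1 c.2.1 c.2.2.1 c.2.2.2.1 c.2.2.2.2) with hF
  set Ftar := ({List.replicate n true, List.replicate n false} : Finset (List Bool)) ∪ F
    with hFtar
  have hsub : Bword S n ⊆ ↑Ftar := by
    rintro w ⟨hlen, y, hy, i, hocc⟩
    have hwj : ∀ j (hj : j < n), w[j]'(by omega) = y (i + j) := by
      intro j hj
      rw [← List.getD_eq_getElem _ false (by omega), hocc j (by omega)]
    rcases hdec y hy with hconst | ⟨v, r, s, z, h1, h2, h3, h4, h5, hz'⟩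
    · -- constant
      have : w = List.replicate n (y 0) := by
        apply List.ext_getElem (by simpa using hlen)
        intro j hj1 hj2
        rw [hwj j (by omega), List.getElem_replicate, hconst]
      rw [hFtar]
      simp only [Finset.coe_union, Set.mem_union]
      left
      cases h0 : y 0
      · rw [this, h0]; simp
      · rw [this, h0]; simp
    · -- structured
      set t := min n (r - i) with htdef
      set qb := decide (s = r + 1 ∧ i ≤ r ∧ r < i + n) with hqbdef
      have hq : qb = true ↔ (s = r + 1 ∧ i ≤ r ∧ r < i + n) := by
        rw [hqbdef]; exact decide_eq_true_iff
      set e := i + t + (if qb then 1 else 0) - s with hedef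
      set p := decide (e % 2 = 1) with hpdef
      set u := List.ofFn (fun a : Fin m => z (e / 2 + (a : ℕ))) with hudef
      have hqval : (if qb then 1 else 0) = (if qb = true then 1 else 0) := by rfl
      have hmaster : ∀ j, j < n → ¬ j < t → ¬ (j = t ∧ qb = true) →
          s + (e + (j - t - (if qb then 1 else 0))) = i + j := by
        intro j hj hjt hjq
        by_cases hqb : (s = r + 1 ∧ i ≤ r ∧ r < i + n)
        · have hq1 : qb = true := hq.mpr hqb
          have hif : (if qb then 1 else 0) = 1 := by rw [hq1]; rfl
          have hjne : j ≠ t := fun h => hjq ⟨h, hq1⟩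
          obtain ⟨hA, hB, hC⟩ := hqb
          rw [hedef, hif]
          omega
        · have hq0 : qb = false := by
            rcases Bool.eq_false_or_eq_true qb with h | h
            · exact absurd (hq.mp h) hqb
            · exact h
          have hif : (if qb then 1 else 0) = 0 := by rw [hq0]; rfl
          rw [hedef, hif]
          omega
      have hwdec : w = decF n t v qb p u := by
        apply List.ext_getElem (by rw [hlen]; simp [decF])
        intro j hj1 hj2
        have hjn : j < n := by omega
        rw [hwj j hjn]
        show y (i + j) = _
        simp only [decF, List.getElem_ofFn]
        by_cases hc1 : j < t
        · rw [if_pos (by simpa using hc1)]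
          exact h3 (i + j) (by omega)
        · rw [if_neg (by simpa using hc1)]
          by_cases hc2 : j = t ∧ qb = true
          · rw [if_pos (by simpa using hc2)]
            have hprops := hq.mp hc2.2
            have hij : i + j = r := by omega
            rw [hij]
            exact h4 r (le_refl r) (by omega)
          · rw [if_neg (by simpa using hc2)]
            have hse := hmaster j hjn hc1 hc2
            set l := j - t - (if qb then 1 else 0) with hldef
            have hyv : y (i + j) = T z (e + l) := by
              rw [← hse]
              exact h5 (e + l)
            rw [hyv, hpdef, hudef]
            exact (expand_eq z e m l (by omega)).symm
      rw [hFtar]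
      simp only [Finset.coe_union, Set.mem_union]
      right
      rw [hF]
      simp only [Finset.coe_image, Set.mem_image]
      refine ⟨(t, v, qb, p, u), ?_, by rw [← hwdec]⟩
      rw [hP]
      refine Finset.mem_product.mpr ⟨Finset.mem_range.mpr (by omega), ?_⟩
      refine Finset.mem_product.mpr ⟨Finset.mem_univ _, ?_⟩
      refine Finset.mem_product.mpr ⟨Finset.mem_univ _, ?_⟩
      refine Finset.mem_product.mpr ⟨Finset.mem_univ _, ?_⟩
      rw [hB']
      simp only [Set.Finite.mem_toFinset]
      rw [hudef]
      exact window_mem hz' (e / 2) m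
  calc (Bword S n).ncard ≤ (↑Ftar : Set (List Bool)).ncard :=
        Set.ncard_le_ncard hsub Ftar.finite_toSet
    _ = Ftar.card := Set.ncard_coe_finset _
    _ ≤ 2 + F.card := by
        refine le_trans (Finset.card_union_le _ _) ?_
        have : ({List.replicate n true, List.replicate n false} : Finset (List Bool)).card ≤ 2 :=
          Finset.card_insert_le _ _ |>.trans (by simp)
        omega
    _ ≤ 2 + P.card := by
        have himg : F.card ≤ P.card := by
          rw [hF]
          exact Finset.card_image_le
        omega
    _ = 2 + (n + 1) * 8 * (Bword S' m).ncard := by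
        rw [hP]
        simp only [Finset.card_product, Finset.card_range, Finset.card_univ, Fintype.card_bool]
        rw [hB'card]
        ring


lemma decomp_chain (j : ℕ) :
    ∀ y ∈ Ssig (bSeq (j + 1)), (∀ i, y i = y 0) ∨
      ∃ (v : Bool) (r s : ℕ) (z : Seq), r ≤ s ∧ s ≤ r + 1 ∧
        (∀ i < r, y i = v) ∧ (∀ i, r ≤ i → i < s → y i = !v) ∧
        (∀ i, y (s + i) = T z i) ∧ z ∈ Ssig (bSeq j) := by
  intro y hy
  rcases decomp (bSeq_le_one (j + 1) (by omega)) hy with h | ⟨v, r, s, z, h1, h2, h3, h4, h5⟩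
  · exact Or.inl h
  · right
    refine ⟨v, r, s, z, h1, h2, h3, h4, h5, ?_⟩
    have hy' : y ∈ Ssig (cons true (T (bSeq j))) := by rw [← bSeq_succ]; exact hy
    exact tail_mem_Ssig hy' h5

lemma Nw_step (j n : ℕ) :
    (Bword (Ssig (bSeq (j + 1))) n).ncard
      ≤ 2 + (n + 1) * 8 * (Bword (Ssig (bSeq j)) (n / 2 + 2)).ncard :=
  count_step (decomp_chain j) (by omega)

lemma Titer_mem {z : Seq} (hz : z ∈ Ssig (bSeq 0)) (k : ℕ) : T^[k] z ∈ Ssig (bSeq k) := by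
  induction k with
  | zero => exact hz
  | succ k ih =>
    rw [Function.iterate_succ_apply', bSeq_succ]
    exact S_lift (bSeq_first k) ih

lemma Titer_sigma {z : Seq} (hz : z ∈ Ssig (bSeq 0)) (k : ℕ) (hk : 1 ≤ k) :
    T^[k] z ∈ SigmaA (bSeq k) := by
  match k, hk with
  | (k + 1), _ =>
    rw [Function.iterate_succ_apply', bSeq_succ]
    exact Sigma_T (bSeq_first k) (Titer_mem hz k)

lemma Titer_apply (z : Seq) (k i : ℕ) : T^[k] z (2 ^ k * i) = z i := by
  induction k with
  | zero => simp
  | succ k ih =>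
    rw [Function.iterate_succ_apply', show 2 ^ (k + 1) * i = 2 * (2 ^ k * i) by ring, T_even, ih]

def patSeq : Seq := fun i => decide (i % 4 ≥ 2)

def zOf (M : ℕ) (u : Fin M → Bool) : Seq :=
  fun i => if h : i < M then u ⟨i, h⟩ else patSeq (i - M)

lemma zOf_mem (M : ℕ) (u : Fin M → Bool) : zOf M u ∈ Ssig (bSeq 0) := by
  intro m
  constructor
  · intro _
    rw [bSeq_zero, lexLt_top_iff]
    refine ⟨M + 4 * (m + 1) - (m + 1), ?_⟩
    rw [shift_iter, show m + 1 + (M + 4 * (m + 1) - (m + 1)) = M + 4 * (m + 1) by omega]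
    unfold zOf
    rw [dif_neg (by omega)]
    unfold patSeq
    simp
  · intro _
    have hmb : mirror (bSeq 0) = (fun _ => false) := rfl
    rw [hmb, lexLt_bot_iff]
    refine ⟨M + 4 * (m + 1) + 2 - (m + 1), ?_⟩
    rw [shift_iter, show m + 1 + (M + 4 * (m + 1) + 2 - (m + 1)) = M + 4 * (m + 1) + 2 by omega]
    unfold zOf
    rw [dif_neg (by omega)]
    unfold patSeq
    simp
    omega

lemma lower_count (k n : ℕ) (hk : 1 ≤ k) :
    2 ^ (n / 2 ^ k) ≤ (Bword (SigmaA (bSeq k)) n).ncard := by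
  classical
  set M := n / 2 ^ k with hM
  set g : (Fin M → Bool) → List Bool := fun u =>
    List.ofFn (fun j : Fin n => T^[k] (zOf M u) (0 + (j : ℕ))) with hg
  have hpow : 0 < 2 ^ k := Nat.pow_pos (by norm_num)
  have hginj : Function.Injective g := by
    intro u1 u2 heq
    funext i
    have hiM : (i : ℕ) < M := i.2
    have hlt : 2 ^ k * (i : ℕ) < n := by
      have h1 : 2 ^ k * (i : ℕ) < 2 ^ k * ((i : ℕ) + 1) :=
        (Nat.mul_lt_mul_left hpow).mpr (by omega)
      have h2 : 2 ^ k * ((i : ℕ) + 1) ≤ 2 ^ k * M := Nat.mul_le_mul_left _ (by omega)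
      have h3 : 2 ^ k * M ≤ n := by
        rw [hM, Nat.mul_comm]
        exact Nat.div_mul_le_self n (2 ^ k)
      omega
    have h := congrArg (fun l : List Bool => l.getD (2 ^ k * (i : ℕ)) false) heq
    simp only [hg] at h
    rw [List.getD_eq_getElem _ _ (by simpa using hlt),
      List.getD_eq_getElem _ _ (by simpa using hlt)] at h
    simp only [List.getElem_ofFn] at h
    rw [show 0 + (2 ^ k * (i : ℕ)) = 2 ^ k * (i : ℕ) by omega] at h
    rw [Titer_apply, Titer_apply] at h
    unfold zOf at h
    rw [dif_pos hiM, dif_pos hiM] at h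
    simpa using h
  have himg : g '' Set.univ ⊆ Bword (SigmaA (bSeq k)) n := by
    rintro w ⟨u, _, rfl⟩
    exact window_mem (Titer_sigma (zOf_mem M u) k hk) 0 n
  calc 2 ^ M = Nat.card (Fin M → Bool) := by
        simp [Nat.card_eq_fintype_card]
    _ = (Set.univ : Set (Fin M → Bool)).ncard := (Set.ncard_univ _).symm
    _ = (g '' Set.univ).ncard := (Set.ncard_image_of_injective _ hginj).symm
    _ ≤ (Bword (SigmaA (bSeq k)) n).ncard := Set.ncard_le_ncard himg (bword_finite _ _)


lemma one_le_two_rpow {t : ℝ} (ht : 0 ≤ t) : (1 : ℝ) ≤ (2 : ℝ) ^ t := by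
  have h := Real.rpow_le_rpow_of_exponent_le (by norm_num : (1:ℝ) ≤ 2) ht
  rwa [Real.rpow_zero] at h

lemma one_le_two_pow_real (e : ℕ) : (1 : ℝ) ≤ 2 ^ e := one_le_pow₀ (by norm_num)

lemma Nbound (j : ℕ) : ∀ n : ℕ, ((Bword (Ssig (bSeq j)) n).ncard : ℝ) ≤
    2 ^ (10 * (j + 1)) * ((n : ℝ) + 2) ^ j * (2 : ℝ) ^ ((n : ℝ) / 2 ^ j) := by
  induction j with
  | zero =>
    intro n
    have h1 : ((Bword (Ssig (bSeq 0)) n).ncard : ℝ) ≤ 2 ^ n := by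
      exact_mod_cast bword_card_le _ n
    have h2 : (2:ℝ) ^ ((n:ℝ) / 2 ^ (0:ℕ)) = 2 ^ n := by
      rw [pow_zero, div_one, Real.rpow_natCast]
    calc ((Bword (Ssig (bSeq 0)) n).ncard : ℝ) ≤ 2 ^ n := h1
      _ ≤ 2 ^ (10 * (0 + 1)) * ((n : ℝ) + 2) ^ 0 * (2:ℝ) ^ ((n : ℝ) / 2 ^ (0:ℕ)) := by
          rw [pow_zero, mul_one, h2]
          have : (1:ℝ) ≤ 2 ^ (10 * (0 + 1)) := one_le_two_pow_real _
          nlinarith [pow_pos (show (0:ℝ) < 2 by norm_num) n]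
  | succ j ih =>
    intro n
    have hEpos : (0:ℝ) ≤ (n : ℝ) / 2 ^ (j + 1) := by positivity
    have hE1 : (1:ℝ) ≤ (2:ℝ) ^ ((n : ℝ) / 2 ^ (j+1)) := one_le_two_rpow hEpos
    have hC1 : (1:ℝ) ≤ 2 ^ (10 * (j + 1)) := one_le_two_pow_real _
    have hn0 : (0:ℝ) ≤ (n : ℝ) := Nat.cast_nonneg n
    have hP1 : (1:ℝ) ≤ ((n : ℝ) + 2) ^ j := one_le_pow₀ (by linarith)
    by_cases hn4 : n < 4
    · have h1 : ((Bword (Ssig (bSeq (j+1))) n).ncard : ℝ) ≤ 2 ^ n := by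
        exact_mod_cast bword_card_le _ n
      have h2 : (2:ℝ) ^ n ≤ 16 := by
        calc (2:ℝ) ^ n ≤ 2 ^ 4 := by
              apply pow_le_pow_right₀ (by norm_num)
              omega
          _ = 16 := by norm_num
      have h3 : (16:ℝ) ≤ 2 ^ (10 * (j + 1 + 1)) := by
        calc (16:ℝ) = 2 ^ 4 := by norm_num
          _ ≤ 2 ^ (10 * (j + 1 + 1)) := by
              apply pow_le_pow_right₀ (by norm_num)
              omega
      have hP1' : (1:ℝ) ≤ ((n : ℝ) + 2) ^ (j+1) := one_le_pow₀ (by linarith)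
      have hPE : (1:ℝ) ≤ ((n : ℝ) + 2) ^ (j+1) * (2:ℝ) ^ ((n : ℝ) / 2 ^ (j+1)) := by
        nlinarith
      calc ((Bword (Ssig (bSeq (j+1))) n).ncard : ℝ) ≤ 2 ^ n := h1
        _ ≤ 16 := h2
        _ ≤ 2 ^ (10 * (j + 1 + 1)) := h3
        _ = 2 ^ (10 * (j + 1 + 1)) * 1 := by ring
        _ ≤ 2 ^ (10 * (j + 1 + 1)) *
            (((n : ℝ) + 2) ^ (j+1) * (2:ℝ) ^ ((n : ℝ) / 2 ^ (j+1))) :=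
            mul_le_mul_of_nonneg_left hPE (by positivity)
        _ = 2 ^ (10 * (j + 1 + 1)) * ((n : ℝ) + 2) ^ (j+1) * (2:ℝ) ^ ((n : ℝ) / 2 ^ (j+1)) := by
            ring
    · push_neg at hn4
      set m' := n / 2 + 2 with hm'
      have hstep : ((Bword (Ssig (bSeq (j+1))) n).ncard : ℝ)
          ≤ 2 + ((n:ℝ) + 1) * 8 * ((Bword (Ssig (bSeq j)) m').ncard : ℝ) := by
        have := Nw_step j n
        have hcast : (((Bword (Ssig (bSeq (j+1))) n).ncard : ℕ) : ℝ)
            ≤ ((2 + (n + 1) * 8 * (Bword (Ssig (bSeq j)) m').ncard : ℕ) : ℝ) := by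
          exact_mod_cast this
        push_cast at hcast
        linarith
      have hIH := ih m'
      -- bound the IH rhs by things in n
      have hm'le : ((m' : ℕ) : ℝ) ≤ (n : ℝ) / 2 + 2 := by
        rw [hm']
        push_cast
        have := Nat.cast_div_le (α := ℝ) (m := n) (n := 2)
        linarith
      have hn4' : (4:ℝ) ≤ (n : ℝ) := by exact_mod_cast hn4
      have hfac2 : ((m' : ℝ) + 2) ^ j ≤ ((n : ℝ) + 2) ^ j := by
        apply pow_le_pow_left₀ (by positivity)
        linarith
      have hfac3 : (2:ℝ) ^ ((m' : ℝ) / 2 ^ j) ≤ 4 * (2:ℝ) ^ ((n : ℝ) / 2 ^ (j+1)) := by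
        have hexp : (m' : ℝ) / 2 ^ j ≤ (n : ℝ) / 2 ^ (j+1) + 2 := by
          have hpj : (0:ℝ) < 2 ^ j := by positivity
          rw [div_le_iff₀ hpj]
          have h2j : (1:ℝ) ≤ 2 ^ j := one_le_two_pow_real j
          have hh : (n : ℝ) / 2 ^ (j+1) * 2 ^ j = (n : ℝ) / 2 := by
            rw [pow_succ]
            field_simp
          calc (m' : ℝ) ≤ (n : ℝ) / 2 + 2 := hm'le
            _ ≤ (n : ℝ) / 2 + 2 * 2 ^ j := by nlinarith
            _ = ((n : ℝ) / 2 ^ (j+1) + 2) * 2 ^ j := by rw [add_mul, hh]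
        calc (2:ℝ) ^ ((m' : ℝ) / 2 ^ j) ≤ (2:ℝ) ^ ((n : ℝ) / 2 ^ (j+1) + 2) :=
              Real.rpow_le_rpow_of_exponent_le (by norm_num) hexp
          _ = (2:ℝ) ^ ((n : ℝ) / 2 ^ (j+1)) * (2:ℝ) ^ ((2:ℕ) : ℝ) := by
              rw [← Real.rpow_add (by norm_num)]
              norm_num
          _ = 4 * (2:ℝ) ^ ((n : ℝ) / 2 ^ (j+1)) := by
              rw [Real.rpow_natCast]
              ring
      have hN4 : ((Bword (Ssig (bSeq j)) m').ncard : ℝ)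
          ≤ 2 ^ (10 * (j + 1)) * ((n : ℝ) + 2) ^ j * (4 * (2:ℝ) ^ ((n : ℝ) / 2 ^ (j+1))) := by
        calc ((Bword (Ssig (bSeq j)) m').ncard : ℝ)
            ≤ 2 ^ (10 * (j + 1)) * ((m' : ℝ) + 2) ^ j * (2:ℝ) ^ ((m' : ℝ) / 2 ^ j) := hIH
          _ ≤ 2 ^ (10 * (j + 1)) * ((n : ℝ) + 2) ^ j * (4 * (2:ℝ) ^ ((n : ℝ) / 2 ^ (j+1))) := by
              have hCpos : (0:ℝ) < 2 ^ (10 * (j + 1)) := by positivity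
              have hEpos' : (0:ℝ) ≤ (2:ℝ) ^ ((m' : ℝ) / 2 ^ j) := by positivity
              have := mul_le_mul hfac2 hfac3 (by positivity) (by positivity)
              nlinarith [mul_le_mul_of_nonneg_left this (le_of_lt hCpos)]
      -- final assembly
      have hCP : (1:ℝ) ≤ 2 ^ (10 * (j + 1)) * ((n : ℝ) + 2) ^ j := by nlinarith
      have hQ1 : (1:ℝ) ≤ 2 ^ (10 * (j + 1)) * ((n : ℝ) + 2) ^ j
          * (2:ℝ) ^ ((n : ℝ) / 2 ^ (j+1)) := by
        nlinarith [mul_le_mul hCP hE1 (by norm_num) (by positivity)]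
      have hrw : (2:ℝ) ^ (10 * (j + 1 + 1)) * ((n : ℝ) + 2) ^ (j + 1)
            * (2:ℝ) ^ ((n : ℝ) / 2 ^ (j+1))
          = 1024 * ((n:ℝ) + 2) * (2 ^ (10 * (j + 1)) * ((n : ℝ) + 2) ^ j
            * (2:ℝ) ^ ((n : ℝ) / 2 ^ (j+1))) := by
        rw [show 10 * (j + 1 + 1) = 10 * (j + 1) + 10 by ring, pow_add, pow_succ]
        ring
      have hmid : ((Bword (Ssig (bSeq (j+1))) n).ncard : ℝ)
          ≤ 2 + ((n:ℝ) + 1) * 8 * (2 ^ (10 * (j + 1)) * ((n : ℝ) + 2) ^ j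
            * (4 * (2:ℝ) ^ ((n : ℝ) / 2 ^ (j+1)))) := by
        refine hstep.trans ?_
        have h8 : (0:ℝ) ≤ ((n:ℝ) + 1) * 8 := by positivity
        have h := mul_le_mul_of_nonneg_left hN4 h8
        linarith
      rw [hrw]
      nlinarith [hmid, hQ1, mul_le_mul_of_nonneg_left hQ1
        (show (0:ℝ) ≤ 992 * (n:ℝ) + 2014 by linarith)]


lemma nat_div_cast_lb (a b : ℕ) (hb : 0 < b) : (a : ℝ) / b - 1 ≤ ((a / b : ℕ) : ℝ) := by
  have h : a < b * (a / b) + b := by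
    have h1 := Nat.div_add_mod a b
    have h2 := Nat.mod_lt a hb
    omega
  have hb' : (0 : ℝ) < b := by exact_mod_cast hb
  have hcast : (a : ℝ) < (b : ℝ) * ((a / b : ℕ) : ℝ) + b := by exact_mod_cast h
  rw [sub_le_iff_le_add, div_le_iff₀ hb']
  nlinarith

lemma sigma_pos (k n : ℕ) (hk : 1 ≤ k) : 1 ≤ (Bword (SigmaA (bSeq k)) n).ncard := by
  have := lower_count k n hk
  have h2 : 1 ≤ 2 ^ (n / 2 ^ k) := Nat.one_le_two_pow
  omega

lemma sigma_upper (k n : ℕ) : ((Bword (SigmaA (bSeq k)) n).ncard : ℝ)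
    ≤ 2 ^ (10 * (k + 1)) * ((n : ℝ) + 2) ^ k * (2 : ℝ) ^ ((n : ℝ) / 2 ^ k) := by
  refine le_trans ?_ (Nbound k n)
  have h := Set.ncard_le_ncard (bword_mono (SigmaA_sub_Ssig (bSeq k)) n)
    (bword_finite (Ssig (bSeq k)) n)
  exact_mod_cast h

lemma logb_upper (k n : ℕ) (hk : 1 ≤ k) :
    Real.logb 2 ((Bword (SigmaA (bSeq k)) n).ncard : ℝ)
      ≤ (10 * (k + 1) : ℕ) + (k : ℝ) * Real.logb 2 ((n : ℝ) + 2) + (n : ℝ) / 2 ^ k := by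
  have hpos : (0 : ℝ) < ((Bword (SigmaA (bSeq k)) n).ncard : ℝ) := by
    exact_mod_cast sigma_pos k n hk
  have h1 : Real.logb 2 ((Bword (SigmaA (bSeq k)) n).ncard : ℝ)
      ≤ Real.logb 2 (2 ^ (10 * (k + 1)) * ((n : ℝ) + 2) ^ k * (2 : ℝ) ^ ((n : ℝ) / 2 ^ k)) :=
    Real.logb_le_logb_of_le (by norm_num) hpos (sigma_upper k n)
  refine h1.trans_eq ?_
  have hA : ((2 : ℝ) ^ (10 * (k + 1)) : ℝ) ≠ 0 := by positivity
  have hB : (((n : ℝ) + 2) ^ k : ℝ) ≠ 0 := by positivity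
  have hE : ((2 : ℝ) ^ ((n : ℝ) / 2 ^ k) : ℝ) ≠ 0 := by positivity
  rw [Real.logb_mul (by positivity) hE, Real.logb_mul hA hB]
  have e1 : Real.logb 2 ((2 : ℝ) ^ (10 * (k + 1))) = (10 * (k + 1) : ℕ) := by
    rw [← Real.rpow_natCast 2 (10 * (k + 1))]
    exact Real.logb_rpow (by norm_num) (by norm_num)
  have e2 : Real.logb 2 (((n : ℝ) + 2) ^ k) = (k : ℝ) * Real.logb 2 ((n : ℝ) + 2) :=
    Real.logb_pow 2 _ k
  have e3 : Real.logb 2 ((2 : ℝ) ^ ((n : ℝ) / 2 ^ k)) = (n : ℝ) / 2 ^ k :=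
    Real.logb_rpow (by norm_num) (by norm_num)
  rw [e1, e2, e3]

lemma logb_lower (k n : ℕ) (hk : 1 ≤ k) :
    ((n / 2 ^ k : ℕ) : ℝ) ≤ Real.logb 2 ((Bword (SigmaA (bSeq k)) n).ncard : ℝ) := by
  have h0 : ((2 ^ (n / 2 ^ k) : ℕ) : ℝ) ≤ ((Bword (SigmaA (bSeq k)) n).ncard : ℝ) := by
    exact_mod_cast lower_count k n hk
  have h1 : Real.logb 2 ((2 ^ (n / 2 ^ k) : ℕ) : ℝ)
      ≤ Real.logb 2 ((Bword (SigmaA (bSeq k)) n).ncard : ℝ) :=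
    Real.logb_le_logb_of_le (by norm_num) (by positivity) h0
  refine le_trans (le_of_eq ?_) h1
  push_cast
  rw [← Real.rpow_natCast 2 (n / 2 ^ k)]
  exact (Real.logb_rpow (by norm_num) (by norm_num)).symm

lemma tendsto_logb_div : Filter.Tendsto (fun n : ℕ => Real.logb 2 ((n : ℝ) + 2) / n)
    Filter.atTop (nhds 0) := by
  have hA : Filter.Tendsto (fun x : ℝ => Real.log x / x) Filter.atTop (nhds 0) := by
    have := Real.isLittleO_log_id_atTop.tendsto_div_nhds_zero
    simpa using this
  have hB : Filter.Tendsto (fun n : ℕ => (n : ℝ) + 2) Filter.atTop Filter.atTop :=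
    Filter.tendsto_atTop_add_const_right _ 2 tendsto_natCast_atTop_atTop
  have hC : Filter.Tendsto (fun n : ℕ => Real.log ((n : ℝ) + 2) / ((n : ℝ) + 2))
      Filter.atTop (nhds 0) := hA.comp hB
  have hD : Filter.Tendsto (fun n : ℕ => ((n : ℝ) + 2) / n) Filter.atTop (nhds 1) := by
    have h1 : Filter.Tendsto (fun n : ℕ => 1 + 2 * (1 / (n : ℝ))) Filter.atTop (nhds 1) := by
      have := (tendsto_one_div_atTop_nhds_zero_nat).const_mul (2 : ℝ)
      have h2 := this.const_add (1 : ℝ)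
      simpa using h2
    refine h1.congr' ?_
    filter_upwards [Filter.eventually_ge_atTop 1] with n hn
    have hn' : ((n : ℝ)) ≠ 0 := by
      have : (1 : ℝ) ≤ (n : ℝ) := by exact_mod_cast hn
      linarith
    field_simp
  have hE : Filter.Tendsto (fun n : ℕ => Real.log ((n : ℝ) + 2) / n) Filter.atTop (nhds 0) := by
    have := hC.mul hD
    rw [zero_mul] at this
    refine this.congr' ?_
    filter_upwards [Filter.eventually_ge_atTop 1] with n hn
    have hn' : ((n : ℝ)) ≠ 0 := by
      have : (1 : ℝ) ≤ (n : ℝ) := by exact_mod_cast hn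
      linarith
    have hn2 : ((n : ℝ) + 2) ≠ 0 := by positivity
    field_simp
  have : Filter.Tendsto (fun n : ℕ => (1 / Real.log 2) * (Real.log ((n : ℝ) + 2) / n))
      Filter.atTop (nhds 0) := by
    have := hE.const_mul (1 / Real.log 2)
    simpa using this
  refine this.congr ?_
  intro n
  rw [Real.logb]
  ring


/-- h_top of the symmetric subshift with parameter (omega_{a*,k})'''
equals 1/2^k, as a genuine limit. -/
theorem statement7 (k : ℕ) (hk : 1 ≤ k) :
    Filter.Tendsto
      (fun n : ℕ =>
        Real.logb 2 ((Bword (SigmaA (triple (astarWord k))) n).ncard) / (n : ℝ))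
      Filter.atTop (nhds ((1 : ℝ) / 2 ^ k)) := by
  rw [triple_astarWord_eq k hk]
  set c : ℝ := (1 : ℝ) / 2 ^ k with hc
  have hpk : (0 : ℝ) < 2 ^ k := by positivity
  have hpkn : (0 : ℕ) < 2 ^ k := Nat.pow_pos (by norm_num)
  have hlow : Filter.Tendsto (fun n : ℕ => c - 1 / (n : ℝ)) Filter.atTop (nhds c) := by
    have h := (tendsto_one_div_atTop_nhds_zero_nat).const_sub c
    simpa using h
  have hup : Filter.Tendsto (fun n : ℕ => ((10 * (k + 1) : ℕ) : ℝ) * (1 / (n : ℝ))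
      + (k : ℝ) * (Real.logb 2 ((n : ℝ) + 2) / n) + c) Filter.atTop (nhds c) := by
    have h1 := (tendsto_one_div_atTop_nhds_zero_nat).const_mul (((10 * (k + 1) : ℕ)) : ℝ)
    have h2 := tendsto_logb_div.const_mul (k : ℝ)
    have h3 := (h1.add h2).add_const c
    simpa using h3
  refine tendsto_of_tendsto_of_tendsto_of_le_of_le' hlow hup ?_ ?_
  · filter_upwards [Filter.eventually_ge_atTop 1] with n hn
    have hn' : (0 : ℝ) < (n : ℝ) := by
      have : (1 : ℝ) ≤ (n : ℝ) := by exact_mod_cast hn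
      linarith
    have hL := logb_lower k n hk
    have hnum := nat_div_cast_lb n (2 ^ k) hpkn
    have heq : ((n : ℝ) / 2 ^ k - 1) / n = c - 1 / n := by
      rw [hc]
      field_simp
    calc c - 1 / (n : ℝ) = ((n : ℝ) / 2 ^ k - 1) / n := heq.symm
      _ ≤ ((n / 2 ^ k : ℕ) : ℝ) / n := by
          gcongr
          push_cast at hnum
          exact hnum
      _ ≤ Real.logb 2 ((Bword (SigmaA (bSeq k)) n).ncard) / n := by gcongr
  · filter_upwards [Filter.eventually_ge_atTop 1] with n hn
    have hn' : (0 : ℝ) < (n : ℝ) := by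
      have : (1 : ℝ) ≤ (n : ℝ) := by exact_mod_cast hn
      linarith
    have hU := logb_upper k n hk
    have heq2 : (((10 * (k + 1) : ℕ) : ℝ) + (k : ℝ) * Real.logb 2 ((n : ℝ) + 2)
          + (n : ℝ) / 2 ^ k) / n
        = ((10 * (k + 1) : ℕ) : ℝ) * (1 / (n : ℝ))
          + (k : ℝ) * (Real.logb 2 ((n : ℝ) + 2) / n) + c := by
      have hD : ((n : ℝ) / 2 ^ k) / n = 1 / 2 ^ k := by
        rw [div_right_comm, div_self (ne_of_gt hn')]
      rw [add_div, add_div, hD, mul_div_assoc, mul_one_div, hc]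
    calc Real.logb 2 ((Bword (SigmaA (bSeq k)) n).ncard) / (n : ℝ)
        ≤ (((10 * (k + 1) : ℕ) : ℝ) + (k : ℝ) * Real.logb 2 ((n : ℝ) + 2)
            + (n : ℝ) / 2 ^ k) / n := by gcongr
      _ = _ := heq2


end Paper
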